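/- The normal-approximation throughput Ψ(z) = Σᵢ log₂(1+zᵢ) − Q⁻¹(ε)·√(Σᵢ a²(1−(1+zᵢ)^{−2})) is a difference of two functions, each of which is concave and nondecreasing in z on (0,∞)ⁿ, provided Q⁻¹(ε) > 0. -/

import Mathlib

open Real Set

lemma concaveOn_finset_sum {ι E : Type*} [AddCommGroup E] [Module ℝ E] {s : Set E}
    (hs : Convex ℝ s) (t : Finset ι) (f : ι → E → ℝ)
    (h : ∀ i ∈ t, ConcaveOn ℝ s (f i)) :
    ConcaveOn ℝ s (fun x => ∑ i ∈ t, f i x) := by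
  classical
  induction t using Finset.induction with
  | empty => simpa using concaveOn_const 0 hs
  | insert _ _ hx ih =>
    simp only [Finset.sum_insert hx]
    exact (h _ (Finset.mem_insert_self _ _)).add
      (ih fun i hi => h i (Finset.mem_insert_of_mem hi))

/-- The affine map `z ↦ 1 + z i`. -/
noncomputable def shiftProj (n : ℕ) (i : Fin n) : (Fin n → ℝ) →ᵃ[ℝ] ℝ where
  toFun := fun z => 1 + z i
  linear := LinearMap.proj i
  map_vadd' := by intro p v; simp [vadd_eq_add]; ring

theorem throughput_difference_of_concave_monotone (n : ℕ) (qinv a : ℝ)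
    (hq : 0 < qinv) (ha : a = Real.logb 2 (Real.exp 1))
    (F V : (Fin n → ℝ) → ℝ)
    (hF : F = fun z => ∑ i, Real.logb 2 (1 + z i))
    (hV : V = fun z => qinv * Real.sqrt (∑ i, a ^ 2 * (1 - ((1 + z i) ^ 2)⁻¹)))
    (S : Set (Fin n → ℝ)) (hS : S = {z | ∀ i, 0 < z i}) :
    ConcaveOn ℝ S F ∧ MonotoneOn F S ∧
    ConcaveOn ℝ S V ∧ MonotoneOn V S := by
  subst hF hV hS
  set S : Set (Fin n → ℝ) := {z | ∀ i, 0 < z i} with hSdef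
  have hSconv : Convex ℝ S := by
    have : S = Set.univ.pi (fun _ => Ioi (0:ℝ)) := by
      ext z; simp [Set.mem_pi, hSdef]
    rw [this]
    exact convex_pi fun i _ => convex_Ioi 0
  have hsub : ∀ i : Fin n, S ⊆ ⇑(shiftProj n i) ⁻¹' Ioi 0 := by
    intro i z hz
    have : (0:ℝ) < 1 + z i := by have := hz i; positivity
    simpa [shiftProj, mem_preimage] using this
  -- concavity of each term of F
  have hFterm : ∀ i : Fin n, ConcaveOn ℝ S (fun z => Real.logb 2 (1 + z i)) := by
    intro i
    have hlog : ConcaveOn ℝ (Ioi (0:ℝ)) Real.log := strictConcaveOn_log_Ioi.concaveOn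
    have h2 := (hlog.comp_affineMap (shiftProj n i)).subset (hsub i) hSconv
    have h3 := h2.smul (c := (Real.log 2)⁻¹) (by positivity)
    convert h3 using 2 with z
    all_goals try with_reducible_and_instances rfl
    simp only [Function.comp, shiftProj, AffineMap.coe_mk, smul_eq_mul]
    rw [Real.logb, div_eq_inv_mul]
  -- concavity of each term of the inner sum of V
  have hVterm : ∀ i : Fin n, ConcaveOn ℝ S
      (fun z => a ^ 2 * (1 - ((1 + z i) ^ 2)⁻¹)) := by
    intro i
    have hzpow : ConvexOn ℝ (Ioi (0:ℝ)) (fun x : ℝ => x ^ (-2 : ℤ)) := convexOn_zpow (-2)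
    have h1 := ((hzpow.comp_affineMap (shiftProj n i)).neg).subset (hsub i) hSconv
    have h3 := (h1.add (concaveOn_const (1:ℝ) hSconv)).smul (c := a ^ 2) (by positivity)
    convert h3 using 2 with z
    all_goals try with_reducible_and_instances rfl
    simp only [Function.comp, shiftProj, AffineMap.coe_mk, Pi.add_apply, Pi.neg_apply,
      smul_eq_mul]
    rw [zpow_neg, zpow_two]
    ring
  have hg : ConcaveOn ℝ S (fun z => ∑ i, a ^ 2 * (1 - ((1 + z i) ^ 2)⁻¹)) :=
    concaveOn_finset_sum hSconv Finset.univ _ fun i _ => hVterm i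
  have hterm_nonneg : ∀ z ∈ S, ∀ i : Fin n,
      0 ≤ a ^ 2 * (1 - ((1 + z i) ^ 2)⁻¹) := by
    intro z hz i
    have h1 : (1:ℝ) < 1 + z i := by linarith [hz i]
    have h2 : (1:ℝ) ≤ (1 + z i) ^ 2 := by nlinarith
    have h3 : ((1 + z i) ^ 2)⁻¹ ≤ 1 := by
      rw [inv_le_one_iff₀]; right; exact h2
    nlinarith [sq_nonneg a]
  have hgnn : ∀ z ∈ S, 0 ≤ ∑ i, a ^ 2 * (1 - ((1 + z i) ^ 2)⁻¹) := fun z hz =>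
    Finset.sum_nonneg fun i _ => hterm_nonneg z hz i
  have hterm_mono : ∀ z ∈ S, ∀ w ∈ S, z ≤ w →
      ∀ i : Fin n, a ^ 2 * (1 - ((1 + z i) ^ 2)⁻¹) ≤ a ^ 2 * (1 - ((1 + w i) ^ 2)⁻¹) := by
    intro z hz w hw hzw i
    have h1 : (0:ℝ) < 1 + z i := by linarith [hz i]
    have h2 : (1 + z i) ^ 2 ≤ (1 + w i) ^ 2 := by nlinarith [hzw i, hz i]
    have h3 : ((1 + w i) ^ 2)⁻¹ ≤ ((1 + z i) ^ 2)⁻¹ := by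
      apply inv_anti₀ (by positivity) h2
    nlinarith [sq_nonneg a]
  refine ⟨concaveOn_finset_sum hSconv Finset.univ _ fun i _ => hFterm i, ?_, ?_, ?_⟩
  · intro z hz w hw hzw
    apply Finset.sum_le_sum
    intro i _
    have h1 : (0:ℝ) < 1 + z i := by linarith [hz i]
    exact Real.logb_le_logb_of_le one_lt_two h1 (by linarith [hzw i])
  · -- concavity of V
    refine ⟨hSconv, ?_⟩
    intro x hx y hy α β hα hβ hab
    set gx := ∑ i, a ^ 2 * (1 - ((1 + x i) ^ 2)⁻¹) with hgx
    set gy := ∑ i, a ^ 2 * (1 - ((1 + y i) ^ 2)⁻¹) with hgy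
    have hgxnn : 0 ≤ gx := hgnn x hx
    have hgynn : 0 ≤ gy := hgnn y hy
    have hcomb := hg.2 hx hy hα hβ hab
    simp only [smul_eq_mul] at hcomb ⊢
    have hsqrt := strictConcaveOn_sqrt.concaveOn.2 (mem_Ici.2 hgxnn) (mem_Ici.2 hgynn)
      hα hβ hab
    simp only [smul_eq_mul] at hsqrt
    have h4 : Real.sqrt (α * gx + β * gy) ≤
        Real.sqrt (∑ i, a ^ 2 * (1 - ((1 + (α • x + β • y) i) ^ 2)⁻¹)) :=
      Real.sqrt_le_sqrt hcomb
    have h5 : α * sqrt gx + β * sqrt gy ≤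
        Real.sqrt (∑ i, a ^ 2 * (1 - ((1 + (α • x + β • y) i) ^ 2)⁻¹)) :=
      le_trans hsqrt h4
    calc α * (qinv * sqrt gx) + β * (qinv * sqrt gy)
        = qinv * (α * sqrt gx + β * sqrt gy) := by ring
      _ ≤ qinv * Real.sqrt (∑ i, a ^ 2 * (1 - ((1 + (α • x + β • y) i) ^ 2)⁻¹)) :=
          mul_le_mul_of_nonneg_left h5 (le_of_lt hq)
  · intro z hz w hw hzw
    have h1 : ∑ i, a ^ 2 * (1 - ((1 + z i) ^ 2)⁻¹) ≤
        ∑ i, a ^ 2 * (1 - ((1 + w i) ^ 2)⁻¹) :=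
      Finset.sum_le_sum fun i _ => hterm_mono z hz w hw hzw i
    exact mul_le_mul_of_nonneg_left (Real.sqrt_le_sqrt h1) (le_of_lt hq)
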